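/- Let J_n denote the number of CCD subsets of V(P_n) (including the empty set and the full vertex set). Then J_1 = 2, J_2 = 4, and J_n = J_{n-1} + J_{n-2} − 2 for all n ≥ 3. -/

import Mathlib

open Finset

variable {V : Type*} [Fintype V] [DecidableEq V]

/-- Number of neighbours of `v` inside the set `S`. -/
def nbrsIn (G : SimpleGraph V) [DecidableRel G.Adj] (S : Finset V) (v : V) : ℕ :=
  (S.filter (fun u => G.Adj v u)).card

/-- `H` is complementary component dominant (CCD). -/
def CCD (G : SimpleGraph V) [DecidableRel G.Adj] (H : Finset V) : Prop :=
  (∀ x y, G.Adj x y → x ∈ H → y ∈ H → nbrsIn G Hᶜ x = nbrsIn G Hᶜ y) ∧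
  (∀ u v, G.Adj u v → u ∉ H → v ∉ H → nbrsIn G H u = nbrsIn G H v)

/-- The path graph on `n` vertices `0, 1, …, n-1`. -/
def pathG (n : ℕ) : SimpleGraph (Fin n) where
  Adj i j := i.val + 1 = j.val ∨ j.val + 1 = i.val
  symm := ⟨by intro i j h; tauto⟩
  loopless := ⟨by intro i h; rcases h with h | h <;> omega⟩

instance (n : ℕ) : DecidableRel (pathG n).Adj :=
  fun i j => inferInstanceAs (Decidable (i.val + 1 = j.val ∨ j.val + 1 = i.val))

/-- The number of CCD subsets of `P_n` (including `∅` and the full vertex set). -/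
noncomputable def J (n : ℕ) : ℕ := Nat.card {H : Finset (Fin n) // CCD (pathG n) H}

variable {n : ℕ}

def extF (f : Fin n → Bool) : ℕ → Bool := fun k => if h : k < n then f ⟨k, h⟩ else false

def chi (S : Finset (Fin n)) : ℕ → Bool := extF (fun i => decide (i ∈ S))

lemma chi_true_iff (S : Finset (Fin n)) (k : ℕ) : chi S k = true ↔ ∃ h : k < n, (⟨k, h⟩ : Fin n) ∈ S := by
  unfold chi extF; split
  · simp_all
  · simp_all

lemma chi_of_lt (S : Finset (Fin n)) {k : ℕ} (h : k < n) : chi S k = decide ((⟨k, h⟩ : Fin n) ∈ S) := by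
  unfold chi extF; rw [dif_pos h]

lemma chi_compl (S : Finset (Fin n)) (k : ℕ) :
    chi Sᶜ k = if k < n then !(chi S k) else false := by
  unfold chi extF; split <;> simp_all

lemma card_filter_val_eq (S : Finset (Fin n)) (c : ℕ) :
    (S.filter (fun u : Fin n => u.val = c)).card = if chi S c then 1 else 0 := by
  by_cases h : chi S c = true
  · rw [if_pos h]
    rw [chi_true_iff] at h
    obtain ⟨hc, hm⟩ := h
    rw [show S.filter (fun u : Fin n => u.val = c) = {⟨c, hc⟩} from ?_]
    · simp
    · ext u
      simp only [mem_filter, mem_singleton]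
      constructor
      · rintro ⟨hu, hv⟩; exact Fin.ext hv
      · rintro rfl; exact ⟨hm, rfl⟩
  · rw [if_neg h]
    rw [Finset.card_eq_zero, Finset.filter_eq_empty_iff]
    intro u hu hv
    apply h
    rw [chi_true_iff]
    exact ⟨hv ▸ u.isLt, by simpa [← hv, Fin.eta] using hu⟩

lemma nbrsIn_path (S : Finset (Fin n)) (v : Fin n) :
    nbrsIn (pathG n) S v =
      (if chi S (v.val+1) then 1 else 0) + (if v.val = 0 then 0 else if chi S (v.val-1) then 1 else 0) := by
  unfold nbrsIn
  have hset : S.filter (fun u => (pathG n).Adj v u)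
      = S.filter (fun u : Fin n => u.val = v.val + 1) ∪ S.filter (fun u : Fin n => v.val ≠ 0 ∧ u.val = v.val - 1) := by
    rw [← Finset.filter_or]
    apply Finset.filter_congr
    intro u _
    show (pathG n).Adj v u ↔ _
    show (v.val + 1 = u.val ∨ u.val + 1 = v.val) ↔ _
    omega
  have hdisj : Disjoint (S.filter (fun u : Fin n => u.val = v.val + 1)) (S.filter (fun u : Fin n => v.val ≠ 0 ∧ u.val = v.val - 1)) := by
    rw [Finset.disjoint_left]
    intro u h1 h2
    simp only [mem_filter] at h1 h2
    omega
  rw [hset, Finset.card_union_of_disjoint hdisj, card_filter_val_eq]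
  congr 1
  by_cases h0 : v.val = 0
  · rw [if_pos h0]
    rw [Finset.card_eq_zero, Finset.filter_eq_empty_iff]
    intro u _
    simp only [not_and]
    intro h; exact absurd h0 h
  · rw [if_neg h0, ← card_filter_val_eq]
    congr 1
    apply Finset.filter_congr
    intro u _
    simp only [ne_eq, h0, not_false_eq_true, true_and]

/-- the key local equation coming from CCD -/
lemma keyE {H : Finset (Fin n)} (hC : CCD (pathG n) H) {a : ℕ} (h1 : a + 1 < n)
    (heq : chi H a = chi H (a+1)) :
    ((a ≠ 0 ∧ chi H (a-1) ≠ chi H a) ↔ (a + 2 < n ∧ chi H (a+2) ≠ chi H a)) := by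
  set x : Fin n := ⟨a, by omega⟩ with hx
  set y : Fin n := ⟨a+1, h1⟩ with hy
  have hadj : (pathG n).Adj x y := Or.inl rfl
  have hxv : x.val = a := rfl
  have hyv : y.val = a + 1 := rfl
  cases hb : chi H a with
  | true =>
    have hxH : x ∈ H := by
      have := (chi_true_iff H a).mp hb; obtain ⟨_, hm⟩ := this; exact hm
    have hyH : y ∈ H := by
      have := (chi_true_iff H (a+1)).mp (heq ▸ hb); obtain ⟨_, hm⟩ := this; exact hm
    have key := hC.1 x y hadj hxH hyH
    rw [nbrsIn_path, nbrsIn_path, hxv, hyv] at key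
    rw [chi_compl, chi_compl, chi_compl, chi_compl] at key
    have h1' : chi H (a+1) = true := heq ▸ hb
    simp only [show a + 1 - 1 = a from rfl, show a + 1 + 1 = a + 2 from rfl, h1', hb,
      if_pos h1, if_pos (show a < n by omega), Bool.not_true] at key
    constructor
    · rintro ⟨ha0, hne⟩
      have hm1 : chi H (a-1) = false := by
        simpa using hne
      rw [if_neg ha0] at key
      rw [if_pos (show a - 1 < n by omega), hm1] at key
      simp only [Bool.not_false, if_true, if_false] at key
      by_cases h2 : a + 2 < n
      · refine ⟨h2, ?_⟩
        rw [if_pos h2] at key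
        cases hc : chi H (a+2)
        · simp [hb]
        · rw [hc] at key; simp at key
      · rw [if_neg h2] at key; simp at key
    · rintro ⟨h2, hne⟩
      have hm2 : chi H (a+2) = false := by
        simpa using hne
      rw [if_pos h2, hm2] at key
      simp only [Bool.not_false, if_true, if_false] at key
      by_cases ha0 : a = 0
      · rw [if_pos ha0] at key; simp at key
      · refine ⟨ha0, ?_⟩
        rw [if_neg ha0, if_pos (show a - 1 < n by omega)] at key
        cases hc : chi H (a-1)
        · simp [hb]
        · rw [hc] at key; simp at key
  | false =>
    have hxH : x ∉ H := by
      intro hm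
      have : chi H a = true := (chi_true_iff H a).mpr ⟨by omega, hm⟩
      rw [hb] at this; exact Bool.false_ne_true this
    have hyH : y ∉ H := by
      intro hm
      have : chi H (a+1) = true := (chi_true_iff H (a+1)).mpr ⟨h1, hm⟩
      rw [← heq, hb] at this; exact Bool.false_ne_true this
    have key := hC.2 x y hadj hxH hyH
    rw [nbrsIn_path, nbrsIn_path, hxv, hyv] at key
    have h1' : chi H (a+1) = false := heq ▸ hb
    simp only [show a + 1 - 1 = a from rfl, show a + 1 + 1 = a + 2 from rfl, h1', hb,
      if_false] at key
    constructor
    · rintro ⟨ha0, hne⟩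
      have hm1 : chi H (a-1) = true := by
        simpa using hne
      rw [if_neg ha0, hm1] at key
      simp only [if_true] at key
      by_cases h2 : a + 2 < n
      · refine ⟨h2, ?_⟩
        cases hc : chi H (a+2)
        · rw [hc] at key; simp at key
        · simp [hb]
      · have : chi H (a+2) = false := by
          unfold chi extF; rw [dif_neg (by omega)]
        rw [this] at key; simp at key
    · rintro ⟨h2, hne⟩
      have hm2 : chi H (a+2) = true := by
        simpa using hne
      rw [hm2] at key
      simp only [if_true] at key
      by_cases ha0 : a = 0
      · rw [if_pos ha0] at key; simp at key
      · refine ⟨ha0, ?_⟩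
        rw [if_neg ha0] at key
        cases hc : chi H (a-1)
        · rw [hc] at key; simp at key
        · simp [hb]
lemma stepF {H : Finset (Fin n)} (hC : CCD (pathG n) H) {a : ℕ} (h2 : a + 2 < n)
    (heq : chi H a = chi H (a+1)) (hL : a = 0 ∨ chi H (a-1) = chi H a) :
    chi H (a+2) = chi H a := by
  have hE := keyE hC (a := a) (by omega) heq
  by_contra hne
  have : a ≠ 0 ∧ chi H (a-1) ≠ chi H a := hE.mpr ⟨h2, hne⟩
  rcases hL with h | h
  · exact this.1 h
  · exact this.2 h

lemma stepB {H : Finset (Fin n)} (hC : CCD (pathG n) H) {a : ℕ} (h1 : a + 1 < n)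
    (heq : chi H a = chi H (a+1)) (hR : ¬(a + 2 < n) ∨ chi H (a+2) = chi H a) :
    a = 0 ∨ chi H (a-1) = chi H a := by
  have hE := keyE hC (a := a) h1 heq
  by_cases ha : a = 0
  · exact Or.inl ha
  · right
    by_contra hne
    have : a + 2 < n ∧ chi H (a+2) ≠ chi H a := hE.mp ⟨ha, hne⟩
    rcases hR with h | h
    · exact h this.1
    · exact this.2 h

lemma fwdProp {H : Finset (Fin n)} (hC : CCD (pathG n) H) {a : ℕ} (h1 : a + 1 < n)
    (heq : chi H a = chi H (a+1)) (hL : a = 0 ∨ chi H (a-1) = chi H a) :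
    ∀ k, a ≤ k → k < n → chi H k = chi H a := by
  have main : ∀ d, a + d < n → chi H (a + d) = chi H a := by
    intro d
    induction d using Nat.strong_induction_on with
    | _ d IH =>
      intro hd
      match d with
      | 0 => rfl
      | 1 => exact heq.symm
      | (e+2) =>
        have he0 : chi H (a+e) = chi H a := IH e (by omega) (by omega)
        have he1 : chi H (a+e+1) = chi H a := IH (e+1) (by omega) (by omega)
        have hL' : a + e = 0 ∨ chi H (a+e-1) = chi H (a+e) := by
          match e with
          | 0 => exact hL
          | (e'+1) =>
            right
            have : chi H (a+e') = chi H a := IH e' (by omega) (by omega)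
            rw [show a + (e'+1) - 1 = a + e' by omega, this, he0]
        have := stepF hC (a := a+e) (by omega) (he0.trans he1.symm) hL'
        rw [show a + (e+2) = a+e+2 by omega, this, he0]
  intro k hak hkn
  have e : a + (k - a) = k := by omega
  have := main (k - a) (by omega)
  rwa [e] at this

lemma bwdProp {H : Finset (Fin n)} (hC : CCD (pathG n) H) {a : ℕ} (h1 : a + 1 < n)
    (heq : chi H a = chi H (a+1)) (hR : ¬(a + 2 < n) ∨ chi H (a+2) = chi H a) :
    ∀ k, k ≤ a → chi H k = chi H a := by
  have main : ∀ d, d ≤ a → chi H (a - d) = chi H a := by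
    intro d
    induction d using Nat.strong_induction_on with
    | _ d IH =>
      intro hd
      match d with
      | 0 => rfl
      | (e+1) =>
        have hje : a - e = (a - (e+1)) + 1 := by omega
        have hj0 : chi H (a - e) = chi H a := IH e (by omega) (by omega)
        have heq' : chi H (a-e) = chi H (a-e+1) := by
          match e with
          | 0 => simpa using heq
          | (e'+1) =>
            have h' : chi H (a - e') = chi H a := IH e' (by omega) (by omega)
            rw [show a - (e'+1) + 1 = a - e' by omega, hj0, h']
        have hR' : ¬(a - e + 2 < n) ∨ chi H (a - e + 2) = chi H (a - e) := by
          match e with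
          | 0 => simpa [hj0] using hR
          | 1 =>
            right
            rw [show a - 1 + 2 = a + 1 by omega, ← heq, hj0]
          | (e'+2) =>
            right
            have h' : chi H (a - e') = chi H a := IH e' (by omega) (by omega)
            rw [show a - (e'+2) + 2 = a - e' by omega, h', hj0]
        have := stepB hC (a := a - e) (by omega) heq' hR'
        rcases this with h | h
        · omega
        · rw [show a - (e+1) = a - e - 1 by omega, h, hj0]
  intro k hk
  have e : a - (a - k) = k := by omega
  have := main (a - k) (by omega)
  rwa [e] at this

def GoodN (n : ℕ) (g : ℕ → Bool) : Prop :=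
  (∀ i < n, i + 2 < n → g i = g (i+1) → g (i+1) ≠ g (i+2)) ∧
  (2 ≤ n → g 0 ≠ g 1) ∧ (2 ≤ n → g (n-2) ≠ g (n-1))

lemma const_trivial {H : Finset (Fin n)} (h : ∀ k, k < n → chi H k = chi H 0) :
    H = ∅ ∨ H = Finset.univ := by
  cases hb : chi H 0 with
  | false =>
    left
    ext x
    simp only [Finset.notMem_empty, iff_false]
    intro hm
    have : chi H x.val = true := (chi_true_iff H x.val).mpr ⟨x.isLt, by simpa using hm⟩
    rw [h x.val x.isLt, hb] at this
    exact Bool.false_ne_true this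
  | true =>
    right
    ext x
    simp only [Finset.mem_univ, iff_true]
    have : chi H x.val = true := by rw [h x.val x.isLt, hb]
    obtain ⟨h', hm⟩ := (chi_true_iff H x.val).mp this
    simpa using hm

lemma ccd_forward (hn : 2 ≤ n) {H : Finset (Fin n)} (hC : CCD (pathG n) H) :
    H = ∅ ∨ H = Finset.univ ∨ GoodN n (chi H) := by
  by_cases hG : GoodN n (chi H)
  · exact Or.inr (Or.inr hG)
  have htriv : H = ∅ ∨ H = Finset.univ := by
    unfold GoodN at hG
    rw [not_and_or, not_and_or] at hG
    rcases hG with h | h | h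
    · -- a triple exists
      push_neg at h
      obtain ⟨i, hi, hi2, he1, he2⟩ := h
      apply const_trivial
      have hfwd := fwdProp hC (a := i+1) (by omega) he2 (Or.inr (by simpa using he1))
      have hbwd := bwdProp hC (a := i) (by omega) he1 (Or.inr (he2.symm.trans he1.symm))
      intro k hk
      have h0 : chi H 0 = chi H i := hbwd 0 (by omega)
      by_cases hki : k ≤ i
      · rw [hbwd k hki, h0]
      · rw [hfwd k (by omega) hk, ← he1, h0]
    · -- g 0 = g 1
      push_neg at h
      obtain ⟨-, h⟩ := h
      apply const_trivial
      intro k hk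
      exact fwdProp hC (by omega) h (Or.inl rfl) k (by omega) hk
    · -- g (n-2) = g (n-1)
      push_neg at h
      obtain ⟨-, h⟩ := h
      have h' : chi H (n-2) = chi H (n-2+1) := by rwa [show n-2+1 = n-1 by omega]
      have hbwd := bwdProp hC (a := n-2) (by omega) h' (Or.inl (by omega))
      apply const_trivial
      intro k hk
      have h0 : chi H 0 = chi H (n-2) := hbwd 0 (by omega)
      by_cases hki : k ≤ n-2
      · rw [hbwd k hki, h0]
      · rw [show k = n-1 by omega, show n-1 = n-2+1 by omega, ← h']
        exact h0.symm
  tauto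
lemma nbrsIn_empty (G : SimpleGraph (Fin n)) [DecidableRel G.Adj] (v : Fin n) :
    nbrsIn G (∅ : Finset (Fin n)) v = 0 := by
  simp [nbrsIn]

lemma ccd_empty : CCD (pathG n) (∅ : Finset (Fin n)) := by
  constructor
  · intro x y _ hx _; exact absurd hx (Finset.notMem_empty x)
  · intro u v _ _ _; rw [nbrsIn_empty, nbrsIn_empty]

lemma ccd_univ : CCD (pathG n) (Finset.univ : Finset (Fin n)) := by
  constructor
  · intro x y _ _ _
    rw [Finset.compl_univ, nbrsIn_empty, nbrsIn_empty]
  · intro u v _ hu _; exact absurd (Finset.mem_univ u) hu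

lemma pair_facts {g : ℕ → Bool} (hG : GoodN n g) {a : ℕ} (h1 : a + 1 < n)
    (heq : g a = g (a+1)) :
    1 ≤ a ∧ a + 2 < n ∧ g (a-1) ≠ g a ∧ g (a+2) ≠ g a := by
  have hn : 2 ≤ n := by omega
  have ha : 1 ≤ a := by
    by_contra h
    have : a = 0 := by omega
    apply hG.2.1 hn
    rw [this] at heq
    simpa using heq
  have ha2 : a + 2 < n := by
    rcases Nat.lt_or_ge (a+2) n with h | h
    · exact h
    · exfalso
      have e1 : a = n - 2 := by omega
      have e2 : a + 1 = n - 1 := by omega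
      exact hG.2.2 hn (e1 ▸ e2 ▸ heq)
  refine ⟨ha, ha2, ?_, ?_⟩
  · intro hne
    have e1 : a - 1 + 1 = a := by omega
    have e2 : a - 1 + 2 = a + 1 := by omega
    have := hG.1 (a-1) (by omega) (by omega)
    rw [e1, e2] at this
    exact this hne heq
  · intro hne
    have := hG.1 a (by omega) (by omega) heq
    rw [← heq] at this
    exact this hne.symm

lemma good_to_ccd (hn : 2 ≤ n) {H : Finset (Fin n)} (hG : GoodN n (chi H)) :
    CCD (pathG n) H := by
  have chi_mem : ∀ x : Fin n, x ∈ H ↔ chi H x.val = true := by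
    intro x
    rw [chi_true_iff]
    constructor
    · intro hm; exact ⟨x.isLt, by simpa using hm⟩
    · rintro ⟨h', hm⟩; simpa using hm
  -- main computation for an ordered adjacent pair
  have mainC : ∀ (S : Finset (Fin n)) (x y : Fin n), x.val + 1 = y.val →
      chi H x.val = chi H y.val →
      (∀ k, k < n → chi S k = (chi H k != chi H x.val)) →
      nbrsIn (pathG n) S x = nbrsIn (pathG n) S y := by
    intro S x y hxy heq' hS
    have heq : chi H x.val = chi H (x.val + 1) := by rw [hxy]; exact heq'
    obtain ⟨ha1, ha2, hm1, hp2⟩ := pair_facts hG (by omega) heq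
    rw [nbrsIn_path, nbrsIn_path, ← hxy]
    have e1 : x.val + 1 - 1 = x.val := by omega
    have c1 : chi S (x.val + 1) = false := by
      rw [hS _ (by omega), bne_eq_false_iff_eq]; exact heq.symm
    have c2 : chi S (x.val - 1) = true := by
      rw [hS _ (by omega), bne_iff_ne]; exact hm1
    have c3 : chi S (x.val + 1 + 1) = true := by
      rw [show x.val + 1 + 1 = x.val + 2 from rfl, hS _ (by omega), bne_iff_ne]; exact hp2
    have c4 : chi S x.val = false := by
      rw [hS _ (by omega), bne_eq_false_iff_eq]
    have hxne : ¬(x.val = 0) := by omega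
    have hyne : ¬(x.val + 1 = 0) := by omega
    rw [e1, c1, c2, c3, c4]
    simp [hxne, hyne]
  constructor
  · intro x y hadj hx hy
    have hx' : chi H x.val = true := (chi_mem x).mp hx
    have hy' : chi H y.val = true := (chi_mem y).mp hy
    have hS : ∀ (z : Fin n), ∀ k, k < n → chi H z.val = true →
        chi Hᶜ k = (chi H k != chi H z.val) := by
      intro z k hk hz
      rw [chi_compl, if_pos hk, hz]
      cases chi H k <;> simp
    rcases hadj with h | h
    · exact mainC Hᶜ x y h (hx'.trans hy'.symm) (fun k hk => hS x k hk hx')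
    · exact (mainC Hᶜ y x h (hy'.trans hx'.symm) (fun k hk => hS y k hk hy')).symm
  · intro x y hadj hx hy
    have hx' : chi H x.val = false := by
      cases hb : chi H x.val
      · rfl
      · exact absurd ((chi_mem x).mpr hb) hx
    have hy' : chi H y.val = false := by
      cases hb : chi H y.val
      · rfl
      · exact absurd ((chi_mem y).mpr hb) hy
    have hS : ∀ (z : Fin n), ∀ k, k < n → chi H z.val = false →
        chi H k = (chi H k != chi H z.val) := by
      intro z k hk hz
      rw [hz]
      cases chi H k <;> simp
    rcases hadj with h | h
    · exact mainC H x y h (hx'.trans hy'.symm) (fun k hk => hS x k hk hx')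
    · exact (mainC H y x h (hy'.trans hx'.symm) (fun k hk => hS y k hk hy')).symm

lemma CCD_iff (hn : 2 ≤ n) (H : Finset (Fin n)) :
    CCD (pathG n) H ↔ H = ∅ ∨ H = Finset.univ ∨ GoodN n (chi H) := by
  constructor
  · exact ccd_forward hn
  · rintro (rfl | rfl | hG)
    · exact ccd_empty
    · exact ccd_univ
    · exact good_to_ccd hn hG
/-! ### Counting good strings -/

lemma extF_lt {m : ℕ} (g : Fin m → Bool) {k : ℕ} (h : k < m) : extF g k = g ⟨k, h⟩ := dif_pos h

def GoodF (m : ℕ) (f : Fin m → Bool) : Prop := GoodN m (extF f)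

instance (m : ℕ) : DecidablePred (GoodF m) := fun f => by
  unfold GoodF GoodN; infer_instance

noncomputable def Ngood (m : ℕ) : ℕ :=
  ((Finset.univ : Finset (Fin m → Bool)).filter (GoodF m)).card

def tl {m : ℕ} (f : Fin (m+1) → Bool) : Fin m → Bool := fun i => f ⟨i.val + 1, by omega⟩
def pr {m : ℕ} (b : Bool) (g : Fin m → Bool) : Fin (m+1) → Bool :=
  fun i => if h : i.val = 0 then b else g ⟨i.val - 1, by omega⟩

lemma extF_tl {m : ℕ} (f : Fin (m+1) → Bool) : extF (tl f) = fun k => extF f (k+1) := by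
  funext k
  unfold extF tl
  by_cases h : k < m
  · rw [dif_pos h, dif_pos (by omega : k + 1 < m + 1)]
  · rw [dif_neg h, dif_neg (by omega : ¬(k + 1 < m + 1))]

lemma extF_pr {m : ℕ} (b : Bool) (g : Fin m → Bool) :
    extF (pr b g) = fun k => if k = 0 then b else extF g (k-1) := by
  funext k
  match k with
  | 0 =>
    show extF (pr b g) 0 = b
    unfold extF pr
    rw [dif_pos (by omega : (0:ℕ) < m+1)]
    rfl
  | (j+1) =>
    show extF (pr b g) (j+1) = extF g j
    unfold extF pr
    by_cases h : j < m
    · rw [dif_pos (by omega : j+1 < m+1)]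
      show (if _ : j+1 = 0 then b else g ⟨j+1-1, _⟩) = _
      rw [dif_neg (Nat.succ_ne_zero j), dif_pos h]
      rfl
    · rw [dif_neg (by omega : ¬(j+1 < m+1)), dif_neg h]

lemma tl_pr {m : ℕ} (b : Bool) (g : Fin m → Bool) : tl (pr b g) = g := by
  funext i
  unfold tl pr
  rw [dif_neg (by omega : ¬(i.val + 1 = 0))]
  congr 1

lemma pr_tl {m : ℕ} (hm : 1 ≤ m) (f : Fin (m+1) → Bool)
    (hb : f (⟨0, by omega⟩ : Fin (m+1)) = !(f (⟨1, by omega⟩ : Fin (m+1)))) :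
    pr (!(f (⟨1, by omega⟩ : Fin (m+1)))) (tl f) = f := by
  funext i
  unfold pr tl
  by_cases h : i.val = 0
  · rw [dif_pos h, ← hb]
    congr 1
    exact Fin.ext (by simp [h])
  · rw [dif_neg h]
    congr 1
    exact Fin.ext (by simp; omega)

/-- Bool helper -/
lemma bool_ne_iff {a b : Bool} : a ≠ b ↔ a = !b := by cases a <;> cases b <;> simp

lemma GoodN_tail {m : ℕ} (hm : 1 ≤ m) {g : ℕ → Bool} (hG : GoodN (m+2) g) (hq : g 1 ≠ g 2) :
    GoodN (m+1) (fun k => g (k+1)) := by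
  obtain ⟨h1, h2, h3⟩ := hG
  refine ⟨?_, ?_, ?_⟩
  · intro i _ hi2 he
    exact h1 (i+1) (by omega) (by omega) he
  · intro _; exact hq
  · intro _
    show g (m+1-2+1) ≠ g (m+1-1+1)
    have e1 : m+1-2+1 = m+2-2 := by omega
    have e2 : m+1-1+1 = m+2-1 := by omega
    rw [e1, e2]
    exact h3 (by omega)

lemma GoodN_pre1 {m : ℕ} (hm : 1 ≤ m) {g : ℕ → Bool} (hG : GoodN (m+1) g) :
    GoodN (m+2) (fun k => if k = 0 then !(g 0) else g (k-1)) := by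
  obtain ⟨h1, h2, h3⟩ := hG
  have hb : g 0 ≠ g 1 := h2 (by omega)
  refine ⟨?_, ?_, ?_⟩
  · intro i _ hi2 he
    match i with
    | 0 =>
      simp at he
    | (j+1) =>
      simp only [if_neg (Nat.succ_ne_zero j), if_neg (Nat.succ_ne_zero (j+1)),
        Nat.add_sub_cancel] at he ⊢
      exact h1 j (by omega) (by omega) he
  · intro _
    simp
  · intro _
    show (if m+2-2 = 0 then !(g 0) else g (m+2-2-1)) ≠ (if m+2-1 = 0 then !(g 0) else g (m+2-1-1))
    rw [if_neg (by omega), if_neg (by omega)]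
    have e1 : m+2-2-1 = m+1-2 := by omega
    have e2 : m+2-1-1 = m+1-1 := by omega
    rw [e1, e2]
    exact h3 (by omega)

lemma GoodN_drop2 {m : ℕ} (hm : 2 ≤ m) {g : ℕ → Bool} (hG : GoodN (m+2) g) (hq : g 1 = g 2) :
    GoodN m (fun k => g (k+2)) := by
  obtain ⟨h1, h2, h3⟩ := hG
  refine ⟨?_, ?_, ?_⟩
  · intro i _ hi2 he
    exact h1 (i+2) (by omega) (by omega) he
  · intro _
    exact h1 1 (by omega) (by omega) hq
  · intro _
    show g (m-2+2) ≠ g (m-1+2)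
    have e1 : m-2+2 = m+2-2 := by omega
    have e2 : m-1+2 = m+2-1 := by omega
    rw [e1, e2]
    exact h3 (by omega)

lemma GoodN_pre2 {m : ℕ} (hm : 2 ≤ m) {g : ℕ → Bool} (hG : GoodN m g) :
    GoodN (m+2) (fun k => if k = 0 then !(g 0) else if k = 1 then g 0 else g (k-2)) := by
  obtain ⟨h1, h2, h3⟩ := hG
  have hb : g 0 ≠ g 1 := h2 hm
  refine ⟨?_, ?_, ?_⟩
  · intro i _ hi2 he
    match i with
    | 0 =>
      simp at he
    | 1 =>
      simp only [if_neg (by omega : (2:ℕ) ≠ 0), if_neg (by omega : (2:ℕ) ≠ 1),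
        if_neg (by omega : (3:ℕ) ≠ 0), if_neg (by omega : (3:ℕ) ≠ 1)]
      show g 0 ≠ g 1
      exact hb
    | (j+2) =>
      simp only [if_neg (by omega : j+2 ≠ 0), if_neg (by omega : j+2+1 ≠ 0),
        if_neg (by omega : j+2+1+1 ≠ 0), if_neg (by omega : j+2+1+1 ≠ 1),
        if_neg (by omega : j+2+1 ≠ 1), if_neg (by omega : j+2 ≠ 1)] at he ⊢
      rw [show j+2-2 = j from rfl, show j+2+1-2 = j+1 by omega] at he
      rw [show j+2+1-2 = j+1 by omega, show j+2+1+1-2 = j+2 by omega]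
      exact h1 j (by omega) (by omega) he
  · intro _
    simp
  · intro _
    show (if m+2-2 = 0 then !(g 0) else if m+2-2 = 1 then g 0 else g (m+2-2-2)) ≠
      (if m+2-1 = 0 then !(g 0) else if m+2-1 = 1 then g 0 else g (m+2-1-2))
    rw [if_neg (by omega), if_neg (by omega), if_neg (by omega), if_neg (by omega)]
    rw [show m+2-2-2 = m-2 by omega, show m+2-1-2 = m-1 by omega]
    exact h3 hm
lemma pr_tl' {m : ℕ} (x : Fin (m+1) → Bool) : pr (x ⟨0, Nat.succ_pos m⟩) (tl x) = x := by
  funext i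
  unfold pr tl
  by_cases h : i.val = 0
  · rw [dif_pos h]
    congr 1
    exact Fin.ext (by simp [h])
  · rw [dif_neg h]
    congr 1
    exact Fin.ext (by simp; omega)

lemma extF_tl_tl {m : ℕ} (f : Fin (m+2) → Bool) :
    extF (tl (tl f)) = fun k => extF f (k+2) := by
  rw [extF_tl, extF_tl]

lemma Ngood_rec {m : ℕ} (hm : 2 ≤ m) : Ngood (m+2) = Ngood (m+1) + Ngood m := by
  have hsplit := Finset.card_filter_add_card_filter_not
    (s := (Finset.univ : Finset (Fin (m+2) → Bool)).filter (GoodF (m+2)))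
    (p := fun f => extF f 1 ≠ extF f 2)
  rw [Ngood, Ngood, Ngood, ← hsplit]
  congr 1
  · -- strings with f1 ≠ f2 ↔ good strings of length m+1
    apply Finset.card_nbij' (i := fun f => tl f)
      (j := fun g => pr (!(extF g 0)) g)
    · intro f hf
      simp only [mem_coe, mem_filter, mem_univ, true_and] at hf ⊢
      obtain ⟨hG, hq⟩ := hf
      show GoodN (m+1) (extF (tl f))
      rw [extF_tl]
      exact GoodN_tail (by omega) hG hq
    · intro g hg
      simp only [mem_coe, mem_filter, mem_univ, true_and] at hg ⊢
      constructor
      · show GoodN (m+2) (extF (pr (!(extF g 0)) g))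
        rw [extF_pr]
        exact GoodN_pre1 (by omega) hg
      · rw [extF_pr]
        show extF g 0 ≠ extF g 1
        exact hg.2.1 (by omega)
    · intro f hf
      simp only [mem_coe, mem_filter, mem_univ, true_and] at hf
      obtain ⟨hG, _⟩ := hf
      have hb : f ⟨0, Nat.succ_pos (m+1)⟩ = !(f ⟨1, by omega⟩) := by
        have h01 : extF f 0 ≠ extF f 1 := hG.2.1 (by omega)
        rw [extF_lt f (by omega), extF_lt f (by omega)] at h01
        exact bool_ne_iff.mp h01
      have hc : (!(extF (tl f) 0)) = f ⟨0, Nat.succ_pos (m+1)⟩ := by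
        rw [extF_tl]
        show (!(extF f 1)) = _
        rw [extF_lt f (by omega : 1 < m+2), hb]
      beta_reduce
      rw [hc]
      exact pr_tl' f
    · intro g hg
      exact tl_pr _ g
  · -- strings with f1 = f2 ↔ good strings of length m
    apply Finset.card_nbij' (i := fun f => tl (tl f))
      (j := fun g => pr (!(extF g 0)) (pr (extF g 0) g))
    · intro f hf
      simp only [mem_coe, mem_filter, mem_univ, true_and, not_not] at hf ⊢
      obtain ⟨hG, hq⟩ := hf
      show GoodN m (extF (tl (tl f)))
      rw [extF_tl_tl]
      exact GoodN_drop2 hm hG hq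
    · intro g hg
      simp only [mem_coe, mem_filter, mem_univ, true_and, not_not] at hg ⊢
      have hform : extF (pr (!(extF g 0)) (pr (extF g 0) g))
          = fun k => if k = 0 then !(extF g 0) else if k = 1 then extF g 0 else extF g (k-2) := by
        rw [extF_pr, extF_pr]
        funext k
        match k with
        | 0 => rfl
        | 1 => rfl
        | (j+2) => rfl
      constructor
      · show GoodN (m+2) _
        rw [hform]
        exact GoodN_pre2 hm hg
      · rw [hform]
        rfl
    · intro f hf
      simp only [mem_coe, mem_filter, mem_univ, true_and, not_not] at hf
      obtain ⟨hG, hq⟩ := hf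
      have h01 : extF f 0 ≠ extF f 1 := hG.2.1 (by omega)
      have e0 : extF f 0 = f ⟨0, by omega⟩ := extF_lt f (by omega)
      have e1 : extF f 1 = f ⟨1, by omega⟩ := extF_lt f (by omega)
      have e2 : extF f 2 = f ⟨2, by omega⟩ := extF_lt f (by omega)
      have hc : extF (tl (tl f)) 0 = (tl f) ⟨0, Nat.succ_pos m⟩ := by
        rw [extF_tl_tl]
        show extF f 2 = _
        rw [← hq, e1]
        rfl
      have hinner : pr (extF (tl (tl f)) 0) (tl (tl f)) = tl f := by
        rw [hc]
        exact pr_tl' (tl f)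
      beta_reduce
      rw [hinner]
      have hc2 : (!(extF (tl (tl f)) 0)) = f ⟨0, Nat.succ_pos (m+1)⟩ := by
        rw [extF_tl_tl]
        show (!(extF f 2)) = _
        rw [← hq, e1]
        rw [e0] at h01
        rw [e1] at h01
        cases hb : f ⟨0, Nat.succ_pos (m+1)⟩ <;>
          cases hb1 : f ⟨1, by omega⟩ <;> simp_all
      rw [hc2]
      exact pr_tl' f
    · intro g hg
      beta_reduce
      rw [tl_pr, tl_pr]

lemma chi_empty (k : ℕ) : chi (∅ : Finset (Fin n)) k = false := by
  unfold chi extF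
  split <;> simp

lemma chi_univ {k : ℕ} (h : k < n) : chi (Finset.univ : Finset (Fin n)) k = true := by
  unfold chi extF
  rw [dif_pos h]
  simp

instance (n : ℕ) : DecidablePred (CCD (pathG n)) := fun H => by unfold CCD; infer_instance

instance (n : ℕ) : DecidablePred (fun H : Finset (Fin n) => GoodN n (chi H)) := fun H => by
  unfold GoodN; infer_instance

lemma J_eq_Ngood {n : ℕ} (hn : 2 ≤ n) : J n = Ngood n + 2 := by
  rw [J, Nat.card_eq_fintype_card, Fintype.card_subtype]
  have hset : (Finset.univ : Finset (Finset (Fin n))).filter (CCD (pathG n))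
      = ((Finset.univ : Finset (Finset (Fin n))).filter (fun H => GoodN n (chi H)))
        ∪ {∅, Finset.univ} := by
    ext H
    simp only [mem_filter, mem_union, mem_insert, mem_singleton, mem_univ, true_and]
    rw [CCD_iff hn]
    tauto
  have hdisj : Disjoint
      ((Finset.univ : Finset (Finset (Fin n))).filter (fun H => GoodN n (chi H)))
      ({∅, Finset.univ} : Finset (Finset (Fin n))) := by
    rw [Finset.disjoint_left]
    intro H hH hmem
    simp only [mem_coe, mem_filter, mem_univ, true_and] at hH
    have h01 := hH.2.1 hn
    simp only [mem_insert, mem_singleton] at hmem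
    rcases hmem with rfl | rfl
    · rw [chi_empty, chi_empty] at h01
      exact h01 rfl
    · rw [chi_univ (by omega), chi_univ (by omega)] at h01
      exact h01 rfl
  rw [hset, Finset.card_union_of_disjoint hdisj]
  congr 1
  · -- bijection with good Bool functions
    apply Finset.card_nbij' (i := fun H => fun i => decide (i ∈ H))
      (j := fun f => Finset.univ.filter (fun i => f i = true))
    · intro H hH
      simp only [mem_coe, mem_filter, mem_univ, true_and] at hH ⊢
      exact hH
    · intro f hf
      simp only [mem_coe, mem_filter, mem_univ, true_and] at hf ⊢
      show GoodN n (chi (Finset.univ.filter (fun i => f i = true)))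
      have : chi (Finset.univ.filter (fun i => f i = true)) = extF f := by
        funext k
        unfold chi extF
        split
        · simp
        · rfl
      rw [this]
      exact hf
    · intro H _
      ext x
      simp
    · intro f _
      funext i
      simp
  · refine Finset.card_pair ?_
    intro h
    have : (⟨0, by omega⟩ : Fin n) ∈ (∅ : Finset (Fin n)) := by
      rw [h]; exact Finset.mem_univ _
    exact absurd this (Finset.notMem_empty _)
theorem J_recurrence :
    J 1 = 2 ∧ J 2 = 4 ∧ ∀ n : ℕ, 3 ≤ n → J n = J (n - 1) + J (n - 2) - 2 := by
  have hJ1 : J 1 = 2 := by rw [J, Nat.card_eq_fintype_card]; decide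
  have hJ2 : J 2 = 4 := by rw [J, Nat.card_eq_fintype_card]; decide
  have hJ3 : J 3 = 4 := by rw [J, Nat.card_eq_fintype_card]; decide
  refine ⟨hJ1, hJ2, ?_⟩
  intro n hn
  rcases eq_or_lt_of_le hn with h3 | h4
  · rw [← h3]
    norm_num [hJ3, hJ2, hJ1]
  · obtain ⟨m, rfl, hm⟩ : ∃ m, n = m + 2 ∧ 2 ≤ m := ⟨n - 2, by omega, by omega⟩
    have e1 : m + 2 - 1 = m + 1 := by omega
    have e2 : m + 2 - 2 = m := by omega
    rw [e1, e2, J_eq_Ngood (by omega), J_eq_Ngood (by omega), J_eq_Ngood (by omega),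
      Ngood_rec hm]
    omega
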